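/- (Theorem, Z-part of the subsystem code distance.) In the merging subsystem code setting, every Z-type dressed logical operator — i.e., every v ∈ F₂^M with ⟨v, x⟩ = 0 for all x ∈ S_X and v ∉ 𝒢_Z — satisfies wt(v) ≥ min(d_A, d_B). -/

import Mathlib

/-- Hamming weight of a vector over `ZMod 2`. -/
def wt {ι : Type} [Fintype ι] (v : ι → ZMod 2) : ℕ :=
  (Finset.univ.filter fun i => v i ≠ 0).card

/-- The standard bilinear form `⟨u, v⟩ = Σ_q u_q v_q` over `ZMod 2`. -/
def bform {ι : Type} [Fintype ι] (u v : ι → ZMod 2) : ZMod 2 := ∑ i, u i * v i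

/-- The `F₂`-row space of a matrix. -/
def rowSpan {m n : Type} [Fintype m] [Fintype n] (H : Matrix m n (ZMod 2)) :
    Submodule (ZMod 2) (n → ZMod 2) :=
  Submodule.span (ZMod 2) (Set.range fun i => fun j => H i j)

/-- The qubit set `M = A ⊔ C ⊔ T` of the merged patch, where `C = VV ⊔ CC` is the qubit set of
the ancilla patch (`VV = [m_A] × [m_B]`, `CC = [r_Ā] × [r_B̄]`) and `T ≅ [r_Ā]` is the set of
interface qubits. -/
abbrev MQ (A : Type) (mA mB rA' rB' : ℕ) : Type :=
  A ⊕ (Fin mA × Fin mB) ⊕ (Fin rA' × Fin rB') ⊕ Fin rA'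

/-- A vector supported on `A`, viewed in `F₂^M`. -/
def onA {A : Type} {mA mB rA' rB' : ℕ} (row : A → ZMod 2) : MQ A mA mB rA' rB' → ZMod 2
  | Sum.inl a => row a
  | _ => 0

/-- The `X`-check `s^X_{i,j}` of the ancilla patch `C` (the hypergraph product of
`(H_Ā, H_B̄)`), viewed as a vector on `M`. -/
def sXC {A : Type} {mA mB rA' rB' : ℕ} (HAbar : Matrix (Fin rA') (Fin mA) (ZMod 2))
    (HBbar : Matrix (Fin rB') (Fin mB) (ZMod 2)) (i : Fin mA) (j : Fin rB') :
    MQ A mA mB rA' rB' → ZMod 2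
  | Sum.inr (Sum.inl (k, l)) => if k = i then HBbar j l else 0
  | Sum.inr (Sum.inr (Sum.inl (k, l))) => if l = j then HAbar k i else 0
  | _ => 0

/-- The `Z`-check `s^Z_{i,j}` of the ancilla patch `C`, viewed as a vector on `M`. -/
def sZC {A : Type} {mA mB rA' rB' : ℕ} (HAbar : Matrix (Fin rA') (Fin mA) (ZMod 2))
    (HBbar : Matrix (Fin rB') (Fin mB) (ZMod 2)) (i : Fin rA') (j : Fin mB) :
    MQ A mA mB rA' rB' → ZMod 2
  | Sum.inr (Sum.inl (k, l)) => if l = j then HAbar i k else 0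
  | Sum.inr (Sum.inr (Sum.inl (k, l))) => if k = i then HBbar l j else 0
  | _ => 0

/-- The standard basis vector at interface qubit `T(i)`. -/
def eT {A : Type} {mA mB rA' rB' : ℕ} (i : Fin rA') : MQ A mA mB rA' rB' → ZMod 2
  | Sum.inr (Sum.inr (Sum.inr j)) => if j = i then 1 else 0
  | _ => 0

/-- The standard basis vector at the `VV` qubit `(k, l)`. -/
def eVV {A : Type} {mA mB rA' rB' : ℕ} (k : Fin mA) (l : Fin mB) :
    MQ A mA mB rA' rB' → ZMod 2
  | Sum.inr (Sum.inl (k', l')) => if k' = k ∧ l' = l then 1 else 0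
  | _ => 0

/-- The standard basis vector at the `A` qubit `a`. -/
def eA {A : Type} [DecidableEq A] {mA mB rA' rB' : ℕ} (a : A) :
    MQ A mA mB rA' rB' → ZMod 2
  | Sum.inl a' => if a' = a then 1 else 0
  | _ => 0

/-- The merged-patch `X`-type stabilizer generator
`S^X_{T,i} = e_{ι_Ā(i)} + e_{VV(i,ℓ)} + Σ_j H_Ā[j,i] e_{T(j)}`. -/
def SXT {A : Type} [DecidableEq A] {mA mB rA' rB' : ℕ}
    (HAbar : Matrix (Fin rA') (Fin mA) (ZMod 2)) (ιA : Fin mA → A) (ℓ : Fin mB) (i : Fin mA) :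
    MQ A mA mB rA' rB' → ZMod 2 :=
  eA (ιA i) + eVV i ℓ + ∑ j, HAbar j i • eT j

/-- The indicator of the column `{VV(i,ℓ)}_{i ∈ [m_A]}` of the ancilla patch, i.e. the
logical `X̄_C`, viewed in `F₂^M`. -/
def XbarC {A : Type} {mA mB rA' rB' : ℕ} (ℓ : Fin mB) : MQ A mA mB rA' rB' → ZMod 2
  | Sum.inr (Sum.inl (_, l)) => if l = ℓ then 1 else 0
  | _ => 0


/-- The `X`-part `𝒢_X` of the gauge group of the merging subsystem code: the span of the rows
of `H_X^A`, the rows of `H_X^C`, and the `S^X_{T,i}`. -/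
def GXgauge {A : Type} [Fintype A] [DecidableEq A] {rXA mA mB rA' rB' : ℕ}
    (HXA : Matrix (Fin rXA) A (ZMod 2))
    (HAbar : Matrix (Fin rA') (Fin mA) (ZMod 2)) (HBbar : Matrix (Fin rB') (Fin mB) (ZMod 2))
    (ιA : Fin mA → A) (ℓ : Fin mB) :
    Submodule (ZMod 2) (MQ A mA mB rA' rB' → ZMod 2) :=
  Submodule.span (ZMod 2)
    ((Set.range fun i : Fin rXA => (onA (HXA i) : MQ A mA mB rA' rB' → ZMod 2)) ∪
      (Set.range fun p : Fin mA × Fin rB' => sXC HAbar HBbar p.1 p.2) ∪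
      (Set.range (SXT HAbar ιA ℓ)))

/-- The `Z`-part `𝒢_Z` of the gauge group of the merging subsystem code: the span of the rows
of `H_Z^A`, the rows of `H_Z^C`, the `z^A_i + e_{T(i)}`, the `s^Z_{i,ℓ} + e_{T(i)}`, and
`z̄_A`. -/
def GZgauge {A : Type} [Fintype A] [DecidableEq A] {rZA mA mB rA' rB' : ℕ}
    (HZA : Matrix (Fin rZA) A (ZMod 2))
    (HAbar : Matrix (Fin rA') (Fin mA) (ZMod 2)) (HBbar : Matrix (Fin rB') (Fin mB) (ZMod 2))
    (ρ : Fin rA' → Fin rZA) (ℓ : Fin mB) (zA0 : A → ZMod 2) :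
    Submodule (ZMod 2) (MQ A mA mB rA' rB' → ZMod 2) :=
  Submodule.span (ZMod 2)
    ((Set.range fun i : Fin rZA => (onA (HZA i) : MQ A mA mB rA' rB' → ZMod 2)) ∪
      (Set.range fun p : Fin rA' × Fin mB => sZC HAbar HBbar p.1 p.2) ∪
      (Set.range fun i : Fin rA' => onA (HZA (ρ i)) + eT i) ∪
      (Set.range fun i : Fin rA' => sZC HAbar HBbar i ℓ + eT i) ∪
      {onA zA0})

/-- The `X`-part of the stabilizer group of the merging subsystem code:
`S_X = {x ∈ 𝒢_X : ⟨x, z⟩ = 0 for all z ∈ 𝒢_Z}`. -/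
def SXstab {A : Type} [Fintype A] [DecidableEq A] {rXA rZA mA mB rA' rB' : ℕ}
    (HXA : Matrix (Fin rXA) A (ZMod 2)) (HZA : Matrix (Fin rZA) A (ZMod 2))
    (HAbar : Matrix (Fin rA') (Fin mA) (ZMod 2)) (HBbar : Matrix (Fin rB') (Fin mB) (ZMod 2))
    (ιA : Fin mA → A) (ρ : Fin rA' → Fin rZA) (ℓ : Fin mB) (zA0 : A → ZMod 2) :
    Set (MQ A mA mB rA' rB' → ZMod 2) :=
  {x | x ∈ GXgauge HXA HAbar HBbar ιA ℓ ∧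
    ∀ z ∈ GZgauge HZA HAbar HBbar ρ ℓ zA0, bform x z = 0}

/-- The `Z`-part of the stabilizer group of the merging subsystem code:
`S_Z = {z ∈ 𝒢_Z : ⟨z, x⟩ = 0 for all x ∈ 𝒢_X}`. -/
def SZstab {A : Type} [Fintype A] [DecidableEq A] {rXA rZA mA mB rA' rB' : ℕ}
    (HXA : Matrix (Fin rXA) A (ZMod 2)) (HZA : Matrix (Fin rZA) A (ZMod 2))
    (HAbar : Matrix (Fin rA') (Fin mA) (ZMod 2)) (HBbar : Matrix (Fin rB') (Fin mB) (ZMod 2))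
    (ιA : Fin mA → A) (ρ : Fin rA' → Fin rZA) (ℓ : Fin mB) (zA0 : A → ZMod 2) :
    Set (MQ A mA mB rA' rB' → ZMod 2) :=
  {z | z ∈ GZgauge HZA HAbar HBbar ρ ℓ zA0 ∧
    ∀ x ∈ GXgauge HXA HAbar HBbar ιA ℓ, bform z x = 0}

/-- `Z`-part of the subsystem code distance for lattice-surgery merging: every `Z`-type
dressed logical operator (a vector orthogonal to all of `S_X` but not in `𝒢_Z`) has weight
at least `min d_A d_B`. -/


lemma surj_of_inj_transpose {m n : ℕ} (H : Matrix (Fin m) (Fin n) (ZMod 2))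
    (h : Function.Injective H.transpose.mulVec) : Function.Surjective H.mulVec := by
  have hinj : Function.Injective H.transpose.mulVecLin := by
    intro a b hab
    exact h hab
  have h1 : Matrix.rank H.transpose = m := by
    rw [Matrix.rank, LinearMap.finrank_range_of_inj hinj]
    simp
  have h2 : Matrix.rank H = m := by rw [← Matrix.rank_transpose, h1]
  have h3 : LinearMap.range H.mulVecLin = ⊤ := by
    apply Submodule.eq_top_of_finrank_eq
    rw [← Matrix.rank, h2]
    simp
  have h4 : Function.Surjective H.mulVecLin := LinearMap.range_eq_top.mp h3
  intro y
  obtain ⟨x, hx⟩ := h4 y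
  exact ⟨x, hx⟩

-- helper lemmas
section helpers
variable {A : Type} [Fintype A] {mA mB rA' rB' : ℕ}

lemma bform_add_right {ι : Type} [Fintype ι] (x z1 z2 : ι → ZMod 2) :
    bform x (z1 + z2) = bform x z1 + bform x z2 := by
  simp [bform, mul_add, Finset.sum_add_distrib]

lemma bform_smul_right {ι : Type} [Fintype ι] (r : ZMod 2) (x z : ι → ZMod 2) :
    bform x (r • z) = r * bform x z := by
  simp [bform, Finset.mul_sum, mul_left_comm]

lemma bform_span_zero {ι : Type} [Fintype ι] (x : ι → ZMod 2) (S : Set (ι → ZMod 2))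
    (h : ∀ z ∈ S, bform x z = 0) :
    ∀ z ∈ Submodule.span (ZMod 2) S, bform x z = 0 := by
  intro z hz
  induction hz using Submodule.span_induction with
  | mem z hzS => exact h z hzS
  | zero => simp [bform]
  | add z1 z2 _ _ h1 h2 => rw [bform_add_right, h1, h2, add_zero]
  | smul r z _ hz => rw [bform_smul_right, hz, mul_zero]

lemma bform_pointwise {ι : Type} [Fintype ι] (x z : ι → ZMod 2)
    (h : ∀ i, x i * z i = 0) : bform x z = 0 :=
  Finset.sum_eq_zero fun i _ => h i

lemma bform_onA_right (v : MQ A mA mB rA' rB' → ZMod 2) (u : A → ZMod 2) :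
    bform v (onA u) = ∑ a, v (Sum.inl a) * u a := by
  rw [bform, Fintype.sum_sum_type]
  simp [onA]

lemma bform_onA_left (u : A → ZMod 2) (v : MQ A mA mB rA' rB' → ZMod 2) :
    bform (onA u) v = ∑ a, u a * v (Sum.inl a) := by
  rw [bform, Fintype.sum_sum_type]
  simp [onA]

lemma bform_sXC_right (HAbar : Matrix (Fin rA') (Fin mA) (ZMod 2))
    (HBbar : Matrix (Fin rB') (Fin mB) (ZMod 2))
    (v : MQ A mA mB rA' rB' → ZMod 2) (i : Fin mA) (j : Fin rB') :
    bform v (sXC HAbar HBbar i j) =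
      (∑ l, v (Sum.inr (Sum.inl (i, l))) * HBbar j l) +
      (∑ k, v (Sum.inr (Sum.inr (Sum.inl (k, j)))) * HAbar k i) := by
  rw [bform, Fintype.sum_sum_type, Fintype.sum_sum_type, Fintype.sum_sum_type]
  simp only [sXC, mul_ite, mul_zero, mul_one]
  rw [Fintype.sum_prod_type, Fintype.sum_prod_type]
  simp [Finset.sum_ite_eq, Finset.sum_ite_eq']
end helpers

section computes
variable {A : Type} [Fintype A] {mA mB rA' rB' : ℕ}
  (HAbar : Matrix (Fin rA') (Fin mA) (ZMod 2)) (HBbar : Matrix (Fin rB') (Fin mB) (ZMod 2))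

lemma bform_sXC_sZC (i : Fin mA) (j : Fin rB') (i' : Fin rA') (j' : Fin mB) :
    bform (sXC (A := A) HAbar HBbar i j) (sZC HAbar HBbar i' j') = 0 := by
  rw [bform, Fintype.sum_sum_type, Fintype.sum_sum_type, Fintype.sum_sum_type]
  simp only [sXC, sZC, ite_mul, mul_ite, zero_mul, mul_zero]
  rw [Fintype.sum_prod_type, Fintype.sum_prod_type]
  simp [Finset.sum_ite_eq, Finset.sum_ite_eq']
  have h2 : ∀ x y : ZMod 2, x * y + y * x = 0 := by decide
  exact h2 _ _

lemma bform_sXC_onA (i : Fin mA) (j : Fin rB') (u : A → ZMod 2) :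
    bform (sXC (A := A) (mB := mB) HAbar HBbar i j) (onA u) = 0 := by
  apply bform_pointwise
  intro q
  rcases q with a | x
  · show (0 : ZMod 2) * _ = 0; ring
  · show _ * (0 : ZMod 2) = 0; ring

lemma bform_sXC_eT (i : Fin mA) (j : Fin rB') (i' : Fin rA') :
    bform (sXC (A := A) (mB := mB) HAbar HBbar i j) (eT i') = 0 := by
  apply bform_pointwise
  intro q
  rcases q with a | ⟨p⟩ | ⟨p⟩ | t
  · show (0 : ZMod 2) * _ = 0; ring
  · show _ * (0 : ZMod 2) = 0; ring
  · show _ * (0 : ZMod 2) = 0; ring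
  · show (0 : ZMod 2) * _ = 0; ring

lemma bform_onA_sZC (u : A → ZMod 2) (i : Fin rA') (j : Fin mB) :
    bform (onA (A := A) (rB' := rB') u) (sZC HAbar HBbar i j) = 0 := by
  apply bform_pointwise
  intro q
  rcases q with a | x
  · show _ * (0 : ZMod 2) = 0; ring
  · show (0 : ZMod 2) * _ = 0; ring

lemma bform_onA_eT (u : A → ZMod 2) (i : Fin rA') :
    bform (onA (A := A) (mA := mA) (mB := mB) (rB' := rB') u) (eT i) = 0 := by
  apply bform_pointwise
  intro q
  rcases q with a | ⟨p⟩ | ⟨p⟩ | t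
  · show _ * (0 : ZMod 2) = 0; ring
  · show (0 : ZMod 2) * _ = 0; ring
  · show (0 : ZMod 2) * _ = 0; ring
  · show (0 : ZMod 2) * _ = 0; ring
end computes


theorem merged_subsystem_distance_Z
    {A : Type} [Fintype A] [DecidableEq A] {rXA rZA mA rA' : ℕ}
    (HXA : Matrix (Fin rXA) A (ZMod 2)) (HZA : Matrix (Fin rZA) A (ZMod 2))
    (hOrthA : HXA * HZA.transpose = 0)
    {B : Type} [Fintype B] [DecidableEq B] {rXB rZB mB rB' : ℕ}
    (HXB : Matrix (Fin rXB) B (ZMod 2)) (HZB : Matrix (Fin rZB) B (ZMod 2))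
    (hOrthB : HXB * HZB.transpose = 0)
    (dA dB : ℕ)
    (hdA : IsLeast {d : ℕ | ∃ v : A → ZMod 2,
      ((HZA.mulVec v = 0 ∧ v ∉ rowSpan HXA) ∨ (HXA.mulVec v = 0 ∧ v ∉ rowSpan HZA)) ∧
      wt v = d} dA)
    (hdB : IsLeast {d : ℕ | ∃ v : B → ZMod 2,
      ((HZB.mulVec v = 0 ∧ v ∉ rowSpan HXB) ∨ (HXB.mulVec v = 0 ∧ v ∉ rowSpan HZB)) ∧
      wt v = d} dB)
    (xA : A → ZMod 2) (hxAker : HZA.mulVec xA = 0) (hxAnl : xA ∉ rowSpan HXA)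
    (hxAmin : ∀ v : A → ZMod 2, HZA.mulVec v = 0 → v ∉ rowSpan HXA → wt xA ≤ wt v)
    (ιA : Fin mA → A) (hιinj : Function.Injective ιA)
    (hιrange : ∀ a, xA a ≠ 0 ↔ ∃ k, ιA k = a)
    (HAbar : Matrix (Fin rA') (Fin mA) (ZMod 2))
    (ρ : Fin rA' → Fin rZA) (hρinj : Function.Injective ρ)
    (hρrange : ∀ j, (∃ a, xA a ≠ 0 ∧ HZA j a ≠ 0) ↔ ∃ i, ρ i = j)
    (hHAbar : ∀ i k, HAbar i k = HZA (ρ i) (ιA k))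
    (zB : B → ZMod 2) (hzBker : HXB.mulVec zB = 0) (hzBnl : zB ∉ rowSpan HZB)
    (hzBmin : ∀ v : B → ZMod 2, HXB.mulVec v = 0 → v ∉ rowSpan HZB → wt zB ≤ wt v)
    (ιB : Fin mB → B) (hιBinj : Function.Injective ιB)
    (hιBrange : ∀ b, zB b ≠ 0 ↔ ∃ k, ιB k = b)
    (HBbar : Matrix (Fin rB') (Fin mB) (ZMod 2))
    (ρB : Fin rB' → Fin rXB) (hρBinj : Function.Injective ρB)
    (hρBrange : ∀ j, (∃ b, zB b ≠ 0 ∧ HXB j b ≠ 0) ↔ ∃ i, ρB i = j)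
    (hHBbar : ∀ i k, HBbar i k = HXB (ρB i) (ιB k))
    (hkerA : {v : Fin mA → ZMod 2 | HAbar.mulVec v = 0} = {0, fun _ => 1})
    (hkerB : {v : Fin mB → ZMod 2 | HBbar.mulVec v = 0} = {0, fun _ => 1})
    (hkerBT : {v : Fin rB' → ZMod 2 | HBbar.transpose.mulVec v = 0} = {0})
    (ℓ : Fin mB)
    (zA0 : A → ZMod 2) (hzA0ker : HXA.mulVec zA0 = 0) (hzA0nl : zA0 ∉ rowSpan HZA)
    (hzA0pair : bform zA0 xA = 1)
    : ∀ v : MQ A mA mB rA' rB' → ZMod 2,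
      (∀ x ∈ SXstab HXA HZA HAbar HBbar ιA ρ ℓ zA0, bform v x = 0) →
      v ∉ GZgauge HZA HAbar HBbar ρ ℓ zA0 →
      min dA dB ≤ wt v := by
  intro v hv hvG
  classical
  by_contra hlt
  push_neg at hlt
  have hltA : wt v < dA := lt_of_lt_of_le hlt (min_le_left _ _)
  have hltB : wt v < dB := lt_of_lt_of_le hlt (min_le_right _ _)
  set vA : A → ZMod 2 := fun a => v (Sum.inl a) with hvA_def
  set f : Fin mA → Fin mB → ZMod 2 := fun k l => v (Sum.inr (Sum.inl (k, l))) with hf_def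
  set g : Fin rA' → Fin rB' → ZMod 2 :=
    fun k l => v (Sum.inr (Sum.inr (Sum.inl (k, l)))) with hg_def
  set t : Fin rA' → ZMod 2 := fun i => v (Sum.inr (Sum.inr (Sum.inr i))) with ht_def
  -- X-checks of A are in S_X
  have hXAmem : ∀ j, (onA (HXA j) : MQ A mA mB rA' rB' → ZMod 2) ∈
      SXstab HXA HZA HAbar HBbar ιA ρ ℓ zA0 := by
    intro j
    refine ⟨Submodule.subset_span (Set.mem_union_left _ (Set.mem_union_left _ ⟨j, rfl⟩)), ?_⟩
    intro z hz
    refine bform_span_zero _ _ ?_ z hz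
    intro z' hz'
    rcases hz' with ((((hz' | hz') | hz') | hz') | hz')
    · obtain ⟨i, rfl⟩ := hz'
      rw [bform_onA_left]
      have := congrFun (congrFun hOrthA j) i
      simpa [Matrix.mul_apply, Matrix.transpose_apply, onA] using this
    · obtain ⟨p, rfl⟩ := hz'
      exact bform_onA_sZC _ _ _ _ _
    · obtain ⟨i, rfl⟩ := hz'
      rw [bform_add_right, bform_onA_eT, add_zero, bform_onA_left]
      have := congrFun (congrFun hOrthA j) (ρ i)
      simpa [Matrix.mul_apply, Matrix.transpose_apply, onA] using this
    · obtain ⟨i, rfl⟩ := hz'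
      rw [bform_add_right, bform_onA_eT, add_zero, bform_onA_sZC]
    · simp only [Set.mem_singleton_iff] at hz'
      subst hz'
      rw [bform_onA_left]
      have := congrFun hzA0ker j
      simpa [Matrix.mulVec, dotProduct, onA] using this
  -- X-checks of C are in S_X
  have hsXCmem : ∀ (i : Fin mA) (j : Fin rB'),
      (sXC HAbar HBbar i j : MQ A mA mB rA' rB' → ZMod 2) ∈
      SXstab HXA HZA HAbar HBbar ιA ρ ℓ zA0 := by
    intro i j
    refine ⟨Submodule.subset_span
      (Set.mem_union_left _ (Set.mem_union_right _ ⟨(i, j), rfl⟩)), ?_⟩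
    intro z hz
    refine bform_span_zero _ _ ?_ z hz
    intro z' hz'
    rcases hz' with ((((hz' | hz') | hz') | hz') | hz')
    · obtain ⟨i', rfl⟩ := hz'
      exact bform_sXC_onA _ _ _ _ _
    · obtain ⟨p, rfl⟩ := hz'
      exact bform_sXC_sZC _ _ _ _ _ _
    · obtain ⟨i', rfl⟩ := hz'
      rw [bform_add_right, bform_sXC_eT, add_zero, bform_sXC_onA]
    · obtain ⟨i', rfl⟩ := hz'
      rw [bform_add_right, bform_sXC_eT, add_zero, bform_sXC_sZC]
    · simp only [Set.mem_singleton_iff] at hz'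
      subst hz'
      exact bform_sXC_onA _ _ _ _ _
  -- constraint (a)
  have hvAker : HXA.mulVec vA = 0 := by
    funext j
    have h1 := hv _ (hXAmem j)
    rw [bform_onA_right] at h1
    simpa [Matrix.mulVec, dotProduct, mul_comm] using h1
  -- constraint (b)
  have hb : ∀ (i : Fin mA) (j : Fin rB'),
      (∑ l, f i l * HBbar j l) + (∑ k, g k j * HAbar k i) = 0 := by
    intro i j
    have h1 := hv _ (hsXCmem i j)
    rwa [bform_sXC_right] at h1
  -- Step 1 : vA is in the row span of HZA
  have hwtvA : wt vA ≤ wt v := by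
    apply Finset.card_le_card_of_injOn (fun a => (Sum.inl a : MQ A mA mB rA' rB'))
    · intro a ha
      simp only [wt, Finset.coe_filter, Set.mem_setOf_eq, Finset.mem_filter, Finset.mem_univ, true_and] at ha ⊢
      exact ha
    · intro a _ b _ hab
      exact Sum.inl.inj hab
  have hvArs : vA ∈ rowSpan HZA := by
    by_contra hno
    have : dA ≤ wt vA := hdA.2 ⟨vA, Or.inr ⟨hvAker, hno⟩, rfl⟩
    omega
  -- dB ≤ mB
  have hmB : wt zB = mB := by
    have himg : (Finset.univ.filter fun b => zB b ≠ 0) = Finset.univ.image ιB := by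
      ext b
      simp [hιBrange b]
    rw [wt, himg, Finset.card_image_of_injective _ hιBinj]
    simp
  have hdBmB : dB ≤ mB := hmB ▸ hdB.2 ⟨zB, Or.inr ⟨hzBker, hzBnl⟩, rfl⟩
  -- pigeonhole : a zero column of f
  set S : Finset (Fin mB) := Finset.univ.filter (fun l => ∃ k, f k l ≠ 0) with hS_def
  have hScard : S.card ≤ wt v := by
    rcases Finset.eq_empty_or_nonempty S with h | ⟨l1, hl1⟩
    · simp [h]
    · have hl1' : ∃ k, f k l1 ≠ 0 := (Finset.mem_filter.mp hl1).2
      have hNE : Nonempty (Fin mA) := ⟨hl1'.choose⟩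
      apply Finset.card_le_card_of_injOn
        (fun l => (Sum.inr (Sum.inl
          ((if h : ∃ k, f k l ≠ 0 then h.choose else Classical.arbitrary _), l))
          : MQ A mA mB rA' rB'))
      · intro l hl
        have hl' : ∃ k, f k l ≠ 0 := (Finset.mem_filter.mp hl).2
        simp only [wt, Finset.coe_filter, Set.mem_setOf_eq, Finset.mem_filter, Finset.mem_univ, true_and]
        rw [dif_pos hl']
        exact hl'.choose_spec
      · intro a _ b _ hab
        have h1 := Sum.inl.inj (Sum.inr.inj hab)
        exact congrArg Prod.snd h1
  have hl0ex : ∃ l0, l0 ∉ S := by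
    by_contra h
    push_neg at h
    have hSu : S = Finset.univ := Finset.eq_univ_iff_forall.mpr h
    rw [hSu] at hScard
    simp only [Finset.card_univ, Fintype.card_fin] at hScard
    omega
  obtain ⟨l0, hl0S⟩ := hl0ex
  have hl0 : ∀ k, f k l0 = 0 := by
    intro k
    by_contra hk
    exact hl0S (Finset.mem_filter.mpr ⟨Finset.mem_univ _, ⟨k, hk⟩⟩)
  -- surjectivity of HBbar.mulVec and choice of c0
  have hinjT : Function.Injective (HBbar.transpose.mulVec) := by
    have hker : LinearMap.ker (HBbar.transpose.mulVecLin) = ⊥ := by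
      apply (Submodule.eq_bot_iff _).mpr
      intro x hx
      have hx' : x ∈ ({v | HBbar.transpose.mulVec v = 0} : Set _) := LinearMap.mem_ker.mp hx
      rw [hkerBT] at hx'
      exact hx'
    exact LinearMap.ker_eq_bot.mp hker
  have hsurj := surj_of_inj_transpose HBbar hinjT
  choose c0 hc0 using fun i => hsurj (g i)
  set Fk : Fin mA → Fin mB → ZMod 2 :=
    fun k l => f k l + ∑ i, HAbar i k * c0 i l with hFk_def
  have hFker : ∀ k, HBbar.mulVec (Fk k) = 0 := by
    intro k
    funext j
    show (∑ l, HBbar j l * Fk k l) = 0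
    calc ∑ l, HBbar j l * Fk k l
        = ∑ l, (HBbar j l * f k l + ∑ i, HAbar i k * (HBbar j l * c0 i l)) := by
          apply Finset.sum_congr rfl
          intro l _
          rw [hFk_def]
          simp only [mul_add, Finset.mul_sum]
          congr 1
          apply Finset.sum_congr rfl
          intro i _
          ring
      _ = (∑ l, HBbar j l * f k l) + ∑ l, ∑ i, HAbar i k * (HBbar j l * c0 i l) := by
          rw [Finset.sum_add_distrib]
      _ = (∑ l, HBbar j l * f k l) + ∑ i, HAbar i k * ∑ l, HBbar j l * c0 i l := by
          congr 1
          rw [Finset.sum_comm]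
          apply Finset.sum_congr rfl
          intro i _
          rw [Finset.mul_sum]
      _ = (∑ l, HBbar j l * f k l) + ∑ i, HAbar i k * g i j := by
          congr 1
          apply Finset.sum_congr rfl
          intro i _
          congr 1
          have := congrFun (hc0 i) j
          simpa [Matrix.mulVec, dotProduct] using this
      _ = (∑ l, f k l * HBbar j l) + ∑ i, g i j * HAbar i k := by
          congr 1 <;> (apply Finset.sum_congr rfl; intro x _; ring)
      _ = 0 := hb k j
  have hFmem : ∀ k, Fk k = 0 ∨ Fk k = fun _ => 1 := by
    intro k
    have h1 : Fk k ∈ ({v | HBbar.mulVec v = 0} : Set _) := hFker k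
    rw [hkerB] at h1
    simpa [Set.mem_insert_iff, Set.mem_singleton_iff] using h1
  set d : Fin rA' → ZMod 2 := fun i => c0 i l0 with hd_def
  set c : Fin rA' → Fin mB → ZMod 2 := fun i l => c0 i l + d i with hc_def
  have hFconst : ∀ k l, Fk k l = ∑ i, HAbar i k * d i := by
    intro k l
    have h0 : Fk k l0 = ∑ i, HAbar i k * d i := by
      rw [hFk_def]
      simp [hl0 k, hd_def]
    have hcc : Fk k l = Fk k l0 := by
      rcases hFmem k with h | h <;> simp [h]
    rw [hcc, h0]
  have hfc : ∀ k l, f k l = ∑ i, HAbar i k * c i l := by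
    intro k l
    have hsplit : (∑ i, HAbar i k * c i l)
        = (∑ i, HAbar i k * c0 i l) + ∑ i, HAbar i k * d i := by
      rw [← Finset.sum_add_distrib]
      apply Finset.sum_congr rfl
      intro i _
      rw [hc_def]
      ring
    rw [hsplit, ← hFconst k l, hFk_def]
    have h2 : ∀ x y : ZMod 2, x = y + (x + y) := by decide
    exact h2 _ _
  have hone : ∀ j, (∑ l, HBbar j l) = 0 := by
    have h1 : (fun _ => (1 : ZMod 2)) ∈ ({v | HBbar.mulVec v = 0} : Set _) := by
      rw [hkerB]
      right
      rfl
    intro j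
    have h2 : HBbar.mulVec (fun _ => (1 : ZMod 2)) = 0 := h1
    have := congrFun h2 j
    simpa [Matrix.mulVec, dotProduct] using this
  have hgc : ∀ k j, g k j = ∑ l, HBbar j l * c k l := by
    intro k j
    have hsplit : (∑ l, HBbar j l * c k l)
        = (∑ l, HBbar j l * c0 k l) + (∑ l, HBbar j l) * d k := by
      rw [Finset.sum_mul, ← Finset.sum_add_distrib]
      apply Finset.sum_congr rfl
      intro l _
      rw [hc_def]
      ring
    rw [hsplit, hone, zero_mul, add_zero]
    have := congrFun (hc0 k) j
    simp only [Matrix.mulVec, dotProduct] at this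
    exact this.symm
  -- assemble membership of v in the gauge group, contradiction
  apply hvG
  have honA_add : ∀ u1 u2 : A → ZMod 2,
      (onA (u1 + u2) : MQ A mA mB rA' rB' → ZMod 2) = onA u1 + onA u2 := by
    intro u1 u2
    funext q
    rcases q with a | x
    · rfl
    · show (0 : ZMod 2) = 0 + 0
      simp
  have honA_smul : ∀ (r : ZMod 2) (u : A → ZMod 2),
      (onA (r • u) : MQ A mA mB rA' rB' → ZMod 2) = r • onA u := by
    intro r u
    funext q
    rcases q with a | x
    · rfl
    · show (0 : ZMod 2) = r • (0 : ZMod 2)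
      simp
  have honA_zero : (onA (0 : A → ZMod 2) : MQ A mA mB rA' rB' → ZMod 2) = 0 := by
    funext q
    rcases q with a | x <;> rfl
  have hkey : ∀ u ∈ rowSpan HZA,
      (onA u : MQ A mA mB rA' rB' → ZMod 2) ∈ GZgauge HZA HAbar HBbar ρ ℓ zA0 := by
    intro u hu
    induction hu using Submodule.span_induction with
    | mem u hu =>
      obtain ⟨i, rfl⟩ := hu
      exact Submodule.subset_span (Set.mem_union_left _ (Set.mem_union_left _
        (Set.mem_union_left _ (Set.mem_union_left _ ⟨i, rfl⟩))))
    | zero =>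
      rw [honA_zero]
      exact Submodule.zero_mem _
    | add u1 u2 _ _ h1 h2 =>
      rw [honA_add]
      exact Submodule.add_mem _ h1 h2
    | smul r u _ h1 =>
      rw [honA_smul]
      exact Submodule.smul_mem _ _ h1
  set w : A → ZMod 2 := vA + ∑ i, t i • (fun a => HZA (ρ i) a) with hw_def
  have hwrs : w ∈ rowSpan HZA := by
    apply Submodule.add_mem _ hvArs
    apply Submodule.sum_mem
    intro i _
    exact Submodule.smul_mem _ _ (Submodule.subset_span ⟨ρ i, rfl⟩)
  have hveq : v = onA w
      + (∑ p : Fin rA' × Fin mB, c p.1 p.2 • sZC HAbar HBbar p.1 p.2)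
      + (∑ i, t i • ((onA (HZA (ρ i)) : MQ A mA mB rA' rB' → ZMod 2) + eT i)) := by
    funext q
    rcases q with a | ⟨k, l⟩ | ⟨k, l⟩ | i'
    · show vA a = _
      simp only [Pi.add_apply, Finset.sum_apply, Pi.smul_apply, smul_eq_mul,
        onA, sZC, eT, hw_def, mul_zero, Finset.sum_const_zero, add_zero, zero_add]
      rw [add_assoc]
      have h2 : ∀ x y : ZMod 2, x = x + (y + y) := by decide
      exact h2 _ _
    · show f k l = _
      simp only [Pi.add_apply, Finset.sum_apply, Pi.smul_apply, smul_eq_mul,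
        onA, sZC, eT, mul_zero, Finset.sum_const_zero, add_zero, zero_add,
        Fintype.sum_prod_type, mul_ite]
      simp only [Finset.sum_ite_eq, Finset.mem_univ, if_true]
      rw [hfc k l]
      exact Finset.sum_congr rfl fun i _ => mul_comm _ _
    · show g k l = _
      simp only [Pi.add_apply, Finset.sum_apply, Pi.smul_apply, smul_eq_mul,
        onA, sZC, eT, mul_zero, Finset.sum_const_zero, add_zero, zero_add,
        Fintype.sum_prod_type, mul_ite]
      rw [Finset.sum_comm]
      simp only [Finset.sum_ite_eq, Finset.mem_univ, if_true]
      rw [hgc k l]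
      exact Finset.sum_congr rfl fun i _ => mul_comm _ _
    · show t i' = _
      simp only [Pi.add_apply, Finset.sum_apply, Pi.smul_apply, smul_eq_mul,
        onA, sZC, eT, mul_zero, mul_ite, mul_one, Finset.sum_const_zero, add_zero, zero_add,
        Finset.sum_ite_eq, Finset.mem_univ, if_true]
  rw [hveq]
  refine Submodule.add_mem _ (Submodule.add_mem _ (hkey w hwrs) ?_) ?_
  · apply Submodule.sum_mem
    intro p _
    apply Submodule.smul_mem
    exact Submodule.subset_span (Set.mem_union_left _ (Set.mem_union_left _
      (Set.mem_union_left _ (Set.mem_union_right _ ⟨p, rfl⟩))))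
  · apply Submodule.sum_mem
    intro i _
    apply Submodule.smul_mem
    exact Submodule.subset_span (Set.mem_union_left _ (Set.mem_union_left _
      (Set.mem_union_right _ ⟨i, rfl⟩)))
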